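/- Let 0 ≤ x₀ < 𝔼[γ(X)·X] and let 𝒢_ns be the set of measurable g : ℝ → ℝ with 𝔼[γ(X)·g(X)] ≥ x₀ and 0 ≤ g(X) ≤ X almost surely, and set q := inf{VaR_p(g(X)) : g ∈ 𝒢_ns}. Then there exists g* ∈ 𝒢_ns with VaR_p(g*(X)) = q, and moreover q < VaR_p(X). -/

import Mathlib

open MeasureTheory Filter
open scoped ENNReal Topology Classical

noncomputable def VaR {Ω : Type*} [MeasurableSpace Ω] (P : Measure Ω) (p : ℝ) (Y : Ω → ℝ) : ℝ :=
  sInf {x : ℝ | p ≤ (P {ω | Y ω ≤ x}).toReal}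

noncomputable def ES {Ω : Type*} [MeasurableSpace Ω] (P : Measure Ω) (p : ℝ) (Y : Ω → ℝ) : ℝ :=
  (1 - p)⁻¹ * ∫ u in p..(1 : ℝ), VaR P u Y

/-- The probability space is atomless. -/
def Atomless {Ω : Type*} [MeasurableSpace Ω] (P : Measure Ω) : Prop :=
  ∀ s : Set Ω, MeasurableSet s → 0 < P s →
    ∃ t, t ⊆ s ∧ MeasurableSet t ∧ 0 < P t ∧ P t < P s

/-- The (topological) support of a measure on ℝ. -/
def msupport (μ : Measure ℝ) : Set ℝ :=
  {x | ∀ ε > 0, 0 < μ (Set.Ioo (x - ε) (x + ε))}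

/-- The distribution `μ` has a density (w.r.t. Lebesgue measure) which is positive
on the support of `μ`. -/
def HasPositiveDensityOnSupport (μ : Measure ℝ) : Prop :=
  ∃ f : ℝ → ℝ, Measurable f ∧
    μ = MeasureTheory.volume.withDensity (fun x => ENNReal.ofReal (f x)) ∧
    ∀ x ∈ msupport μ, 0 < f x

/-- The distribution `μ` has a density (w.r.t. Lebesgue measure) which is decreasing
(and positive) on the support of `μ`. -/
def HasDecreasingDensityOnSupport (μ : Measure ℝ) : Prop :=
  ∃ f : ℝ → ℝ, Measurable f ∧
    μ = MeasureTheory.volume.withDensity (fun x => ENNReal.ofReal (f x)) ∧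
    AntitoneOn f (msupport μ) ∧ ∀ x ∈ msupport μ, 0 < f x

/-- Membership in the admissible set 𝒢_cm (complete market): measurable `g` with
budget constraint `𝔼[γ(X)·g(X)] ≥ x₀`. -/
def memGcm {Ω : Type*} [MeasurableSpace Ω] (P : Measure Ω) (X : Ω → ℝ) (γ : ℝ → ℝ)
    (x₀ : ℝ) (g : ℝ → ℝ) : Prop :=
  Measurable g ∧ Integrable (fun ω => γ (X ω) * g (X ω)) P ∧
    x₀ ≤ ∫ ω, γ (X ω) * g (X ω) ∂P

/-- Membership in the admissible set 𝒢_ns (no short-selling):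
`𝔼[γ(X)·g(X)] ≥ x₀` and `0 ≤ g(X) ≤ X` a.s. -/
def memGns {Ω : Type*} [MeasurableSpace Ω] (P : Measure Ω) (X : Ω → ℝ) (γ : ℝ → ℝ)
    (x₀ : ℝ) (g : ℝ → ℝ) : Prop :=
  Measurable g ∧ Integrable (fun ω => γ (X ω) * g (X ω)) P ∧
    x₀ ≤ ∫ ω, γ (X ω) * g (X ω) ∂P ∧
    (∀ᵐ ω ∂P, 0 ≤ g (X ω) ∧ g (X ω) ≤ X ω)

/-- Membership in the admissible set 𝒢_bd (bounded positions):
`𝔼[γ(X)·g(X)] ≥ x₀` and `0 ≤ g(X) ≤ m` a.s. -/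
def memGbd {Ω : Type*} [MeasurableSpace Ω] (P : Measure Ω) (X : Ω → ℝ) (γ : ℝ → ℝ)
    (x₀ m : ℝ) (g : ℝ → ℝ) : Prop :=
  Measurable g ∧ Integrable (fun ω => γ (X ω) * g (X ω)) P ∧
    x₀ ≤ ∫ ω, γ (X ω) * g (X ω) ∂P ∧
    (∀ᵐ ω ∂P, 0 ≤ g (X ω) ∧ g (X ω) ≤ m)

section AuxNP
open Set

lemma aux_iInter_Iic (r : ℝ) : ⋂ n : ℕ, Set.Iic (r + 1/(n+1)) = Set.Iic r := by
  ext x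
  simp only [Set.mem_iInter, Set.mem_Iic]
  constructor
  · intro h
    by_contra hx
    push_neg at hx
    obtain ⟨n, hn⟩ := exists_nat_one_div_lt (sub_pos.mpr hx)
    have h2 := h n
    rw [one_div] at h2 hn
    linarith
  · intro h n
    have : (0:ℝ) < 1/(n+1) := by positivity
    linarith

lemma aux_iUnion_Iic_lt (r : ℝ) : ⋃ n : ℕ, Set.Iic (r - 1/(n+1)) = Set.Iio r := by
  ext x
  simp only [Set.mem_iUnion, Set.mem_Iic, Set.mem_Iio]
  constructor
  · rintro ⟨n, hn⟩
    have : (0:ℝ) < 1/(n+1) := by positivity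
    linarith
  · intro h
    obtain ⟨n, hn⟩ := exists_nat_one_div_lt (sub_pos.mpr h)
    refine ⟨n, ?_⟩
    rw [one_div] at hn ⊢
    linarith

/-- For a finite atomless measure on ℝ, any value up to the measure of a measurable set
is attained by a measurable subset. -/
lemma exists_subset_measure_eq'' (μ : Measure ℝ) [IsFiniteMeasure μ]
    (hna : ∀ a : ℝ, μ {a} = 0) {E : Set ℝ} (hE : MeasurableSet E) {m : ℝ≥0∞}
    (hm : m ≤ μ E) : ∃ S, S ⊆ E ∧ MeasurableSet S ∧ μ S = m := by
  set ν := μ.restrict E with hν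
  rcases eq_or_ne m 0 with rfl | hm0
  · exact ⟨∅, Set.empty_subset _, MeasurableSet.empty, measure_empty⟩
  rcases eq_or_lt_of_le hm with heq | hlt
  · exact ⟨E, le_refl _, hE, heq.symm⟩
  have hνuniv : ν Set.univ = μ E := by rw [hν, Measure.restrict_apply' hE, Set.univ_inter]
  have hνna : ∀ a : ℝ, ν {a} = 0 := by
    intro a
    exact le_antisymm (le_trans (Measure.restrict_le_self _) (hna a).le) (zero_le)
  set T := {r : ℝ | ν (Set.Iic r) ≤ m} with hT
  have hTne : T.Nonempty := by
    by_contra hne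
    have h1 : ∀ r : ℝ, m < ν (Set.Iic r) := fun r => lt_of_not_ge (fun h => hne ⟨r, h⟩)
    have h2 : (⋂ n : ℕ, Set.Iic (-(n:ℝ))) = (∅ : Set ℝ) := by
      ext x
      simp only [Set.mem_iInter, Set.mem_Iic, Set.mem_empty_iff_false, iff_false]
      push_neg
      obtain ⟨n, hn⟩ := exists_nat_gt (-x)
      exact ⟨n, by linarith⟩
    have h3 : ν (⋂ n : ℕ, Set.Iic (-(n:ℝ))) = ⨅ n : ℕ, ν (Set.Iic (-(n:ℝ))) := by
      refine Antitone.measure_iInter (fun i j hij => ?_)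
        (fun n => measurableSet_Iic.nullMeasurableSet) ⟨0, measure_ne_top _ _⟩
      exact Set.Iic_subset_Iic.mpr (by exact_mod_cast neg_le_neg (Nat.cast_le.mpr hij))
    rw [h2, measure_empty] at h3
    have h4 : m ≤ ⨅ n : ℕ, ν (Set.Iic (-(n:ℝ))) := le_iInf fun n => (h1 _).le
    exact hm0 (le_antisymm (h4.trans h3.ge) (zero_le))
  have hTbdd : BddAbove T := by
    by_contra hbd
    have h1 : ∀ n : ℕ, ∃ r ∈ T, (n:ℝ) ≤ r := by
      intro n
      rcases not_bddAbove_iff.mp hbd (n:ℝ) with ⟨r, hr, hrn⟩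
      exact ⟨r, hr, hrn.le⟩
    have h2 : ∀ n : ℕ, ν (Set.Iic (n:ℝ)) ≤ m := by
      intro n
      obtain ⟨r, hrT, hnr⟩ := h1 n
      exact le_trans (measure_mono (Set.Iic_subset_Iic.mpr hnr)) hrT
    have h3 : (⋃ n : ℕ, Set.Iic (n:ℝ)) = Set.univ := by
      ext x
      simp only [Set.mem_iUnion, Set.mem_Iic, Set.mem_univ, iff_true]
      obtain ⟨n, hn⟩ := exists_nat_gt x
      exact ⟨n, hn.le⟩
    have h4 : ν Set.univ = ⨆ n : ℕ, ν (Set.Iic (n:ℝ)) := by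
      rw [← h3]
      exact Monotone.measure_iUnion (fun i j hij => Set.Iic_subset_Iic.mpr (Nat.cast_le.mpr hij))
    have h5 : ν Set.univ ≤ m := h4.le.trans (iSup_le h2)
    rw [hνuniv] at h5
    exact absurd hlt (not_lt.mpr h5)
  set r₀ := sSup T with hr₀
  have hub : ν (Set.Iio r₀) ≤ m := by
    rw [← aux_iUnion_Iic_lt r₀]
    refine le_trans (Monotone.measure_iUnion (fun i j hij => Set.Iic_subset_Iic.mpr ?_)).le
      (iSup_le fun n => ?_)
    · have : (1:ℝ)/(j+1) ≤ 1/(i+1) := by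
        apply one_div_le_one_div_of_le (by positivity)
        exact_mod_cast Nat.add_le_add_right hij 1
      linarith
    · have h1 : (0:ℝ) < 1/(n+1) := by positivity
      have h2 : r₀ - 1/(n+1) < r₀ := by linarith
      obtain ⟨t', ht'T, ht'⟩ := exists_lt_of_lt_csSup hTne h2
      exact le_trans (measure_mono (Set.Iic_subset_Iic.mpr ht'.le)) ht'T
  have hIicIio : ν (Set.Iic r₀) = ν (Set.Iio r₀) := by
    have : Set.Iic r₀ = Set.Iio r₀ ∪ {r₀} := by
      ext x; simp [le_iff_lt_or_eq]
    rw [this]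
    exact le_antisymm (le_trans (measure_union_le _ _) (by rw [hνna r₀, add_zero]))
      (measure_mono Set.subset_union_left)
  have hlb : m ≤ ν (Set.Iic r₀) := by
    rw [← aux_iInter_Iic r₀]
    have h1 : ∀ n : ℕ, m ≤ ν (Set.Iic (r₀ + 1/(n+1))) := by
      intro n
      have h2 : (0:ℝ) < 1/(n+1) := by positivity
      have h3 : r₀ + 1/(n+1) ∉ T := fun hmem => absurd (le_csSup hTbdd hmem) (by linarith)
      exact (lt_of_not_ge h3).le
    have h4 : ν (⋂ n : ℕ, Set.Iic (r₀ + 1/(n+1))) = ⨅ n : ℕ, ν (Set.Iic (r₀ + 1/(n+1))) := by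
      refine Antitone.measure_iInter (fun i j hij => Set.Iic_subset_Iic.mpr ?_)
        (fun n => measurableSet_Iic.nullMeasurableSet) ⟨0, measure_ne_top _ _⟩
      have : (1:ℝ)/(j+1) ≤ 1/(i+1) := by
        apply one_div_le_one_div_of_le (by positivity)
        exact_mod_cast Nat.add_le_add_right hij 1
      linarith
    rw [h4]
    exact le_iInf h1
  refine ⟨E ∩ Set.Iic r₀, Set.inter_subset_left, hE.inter measurableSet_Iic, ?_⟩
  have : μ (E ∩ Set.Iic r₀) = ν (Set.Iic r₀) := by
    rw [hν, Measure.restrict_apply' hE, Set.inter_comm]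
  rw [this]
  exact le_antisymm (hIicIio ▸ hub) hlb

/-- Neyman–Pearson-type lemma: there is a measurable set of measure exactly `p`
minimizing the integral of a nonnegative cost among all sets of measure at least `p`. -/
lemma np_lemma (μ : Measure ℝ) [IsProbabilityMeasure μ] (hna : ∀ a : ℝ, μ {a} = 0)
    {p : ℝ} (hp0 : 0 < p) (hp1 : p < 1)
    {c : ℝ → ℝ} (hcm : Measurable c) (hc0 : ∀ x, 0 ≤ c x) (hci : Integrable c μ) :
    ∃ A : Set ℝ, MeasurableSet A ∧ μ A = ENNReal.ofReal p ∧
      ∀ B : Set ℝ, MeasurableSet B → ENNReal.ofReal p ≤ μ B →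
        ∫ x in A, c x ∂μ ≤ ∫ x in B, c x ∂μ := by
  have hpone : ENNReal.ofReal p < 1 := by
    rw [← ENNReal.ofReal_one]
    exact (ENNReal.ofReal_lt_ofReal_iff one_pos).mpr hp1
  set L := {l : ℝ | 0 ≤ l ∧ ENNReal.ofReal p ≤ μ (c ⁻¹' Set.Iic l)} with hL
  have hLne : L.Nonempty := by
    have h3 : (⋃ n : ℕ, c ⁻¹' Set.Iic (n:ℝ)) = Set.univ := by
      ext x
      simp only [Set.mem_iUnion, Set.mem_preimage, Set.mem_Iic, Set.mem_univ, iff_true]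
      obtain ⟨n, hn⟩ := exists_nat_gt (c x)
      exact ⟨n, hn.le⟩
    have h4 : (1:ℝ≥0∞) = ⨆ n : ℕ, μ (c ⁻¹' Set.Iic (n:ℝ)) := by
      rw [← Monotone.measure_iUnion (fun i j hij =>
        Set.preimage_mono (Set.Iic_subset_Iic.mpr (Nat.cast_le.mpr hij))), h3, measure_univ]
    have h5 : ENNReal.ofReal p < ⨆ n : ℕ, μ (c ⁻¹' Set.Iic (n:ℝ)) := h4 ▸ hpone
    obtain ⟨n, hn⟩ := lt_iSup_iff.mp h5
    exact ⟨n, Nat.cast_nonneg n, hn.le⟩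
  have hLbdd : BddBelow L := ⟨0, fun l hl => hl.1⟩
  set lam := sInf L with hlam
  have hlam0 : 0 ≤ lam := le_csInf hLne fun l hl => hl.1
  have hle : ENNReal.ofReal p ≤ μ (c ⁻¹' Set.Iic lam) := by
    have h1 : c ⁻¹' Set.Iic lam = ⋂ n : ℕ, c ⁻¹' Set.Iic (lam + 1/(n+1)) := by
      rw [← Set.preimage_iInter, aux_iInter_Iic]
    rw [h1]
    have h2 : ∀ n : ℕ, ENNReal.ofReal p ≤ μ (c ⁻¹' Set.Iic (lam + 1/(n+1))) := by
      intro n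
      have h3 : lam < lam + 1/(n+1) := by
        have : (0:ℝ) < 1/(n+1) := by positivity
        linarith
      obtain ⟨l, hlL, hl⟩ := exists_lt_of_csInf_lt hLne h3
      exact le_trans hlL.2 (measure_mono (Set.preimage_mono (Set.Iic_subset_Iic.mpr hl.le)))
    have h4 : μ (⋂ n : ℕ, c ⁻¹' Set.Iic (lam + 1/(n+1))) =
        ⨅ n : ℕ, μ (c ⁻¹' Set.Iic (lam + 1/(n+1))) := by
      refine Antitone.measure_iInter (fun i j hij => Set.preimage_mono (Set.Iic_subset_Iic.mpr ?_))
        (fun n => (hcm measurableSet_Iic).nullMeasurableSet) ⟨0, measure_ne_top _ _⟩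
      have : (1:ℝ)/(j+1) ≤ 1/(i+1) := by
        apply one_div_le_one_div_of_le (by positivity)
        exact_mod_cast Nat.add_le_add_right hij 1
      linarith
    rw [h4]
    exact le_iInf h2
  have hltp : μ (c ⁻¹' Set.Iio lam) ≤ ENNReal.ofReal p := by
    have h1 : c ⁻¹' Set.Iio lam = ⋃ n : ℕ, c ⁻¹' Set.Iic (lam - 1/(n+1)) := by
      rw [← Set.preimage_iUnion, aux_iUnion_Iic_lt]
    rw [h1]
    have h2 : ∀ n : ℕ, μ (c ⁻¹' Set.Iic (lam - 1/(n+1))) ≤ ENNReal.ofReal p := by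
      intro n
      rcases lt_or_ge (lam - 1/(n+1)) 0 with hneg | hpos
      · have : c ⁻¹' Set.Iic (lam - 1/(n+1)) = ∅ := by
          ext x
          simp only [Set.mem_preimage, Set.mem_Iic, Set.mem_empty_iff_false, iff_false, not_le]
          exact lt_of_lt_of_le hneg (hc0 x)
        rw [this, measure_empty]
        exact zero_le
      · have h3 : lam - 1/(n+1) ∉ L := by
          intro hmem
          have := csInf_le hLbdd hmem
          have h5 : (0:ℝ) < 1/(n+1) := by positivity
          rw [← hlam] at this
          linarith
        rw [hL, Set.mem_setOf_eq, not_and] at h3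
        exact (lt_of_not_ge (h3 hpos)).le
    refine le_trans (Monotone.measure_iUnion (fun i j hij =>
      Set.preimage_mono (Set.Iic_subset_Iic.mpr ?_))).le (iSup_le h2)
    have : (1:ℝ)/(j+1) ≤ 1/(i+1) := by
      apply one_div_le_one_div_of_le (by positivity)
      exact_mod_cast Nat.add_le_add_right hij 1
    linarith
  -- split {c ≤ lam} into {c < lam} and {c = lam}
  have hsplit : μ (c ⁻¹' Set.Iio lam) + μ (c ⁻¹' {lam}) = μ (c ⁻¹' Set.Iic lam) := by
    rw [← measure_union _ (hcm (measurableSet_singleton lam))]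
    · congr 1
      ext x
      simp only [Set.mem_union, Set.mem_preimage, Set.mem_Iio, Set.mem_singleton_iff, Set.mem_Iic]
      exact (le_iff_lt_or_eq (a := c x) (b := lam)).symm
    · exact Set.disjoint_left.mpr fun x hx hx' => absurd hx' (by simp; exact ne_of_lt hx)
  have hEm : ENNReal.ofReal p - μ (c ⁻¹' Set.Iio lam) ≤ μ (c ⁻¹' {lam}) := by
    rw [tsub_le_iff_left]
    rw [hsplit]
    exact hle
  obtain ⟨S, hSsub, hSmeas, hSm⟩ := exists_subset_measure_eq'' μ hna
    (hcm (measurableSet_singleton lam)) hEm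
  set A := c ⁻¹' Set.Iio lam ∪ S with hA
  have hAmeas : MeasurableSet A := (hcm measurableSet_Iio).union hSmeas
  have hdisj : Disjoint (c ⁻¹' Set.Iio lam) S := by
    refine Set.disjoint_left.mpr fun x hx hxS => ?_
    have : c x = lam := hSsub hxS
    simp only [Set.mem_preimage, Set.mem_Iio] at hx
    linarith
  have hAp : μ A = ENNReal.ofReal p := by
    rw [hA, measure_union hdisj hSmeas, hSm, add_tsub_cancel_of_le hltp]
  refine ⟨A, hAmeas, hAp, ?_⟩
  intro B hB hBp
  have hAle : ∀ x ∈ A, c x ≤ lam := by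
    intro x hx
    rcases hx with hx | hx
    · exact le_of_lt hx
    · exact le_of_eq (hSsub hx)
  have hAge : ∀ x ∉ A, lam ≤ c x := by
    intro x hx
    by_contra h
    exact hx (Or.inl (lt_of_not_ge h))
  -- measure comparison
  have hmeasle : μ (A \ B) ≤ μ (B \ A) := by
    have h1 : μ (A ∩ B) + μ (A \ B) = ENNReal.ofReal p := by
      rw [measure_inter_add_diff A hB, hAp]
    have h2 : μ (A ∩ B) + μ (B \ A) = μ B := by
      rw [← measure_inter_add_diff B hAmeas, Set.inter_comm]
    have h3 : μ (A ∩ B) + μ (A \ B) ≤ μ (A ∩ B) + μ (B \ A) := by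
      rw [h1, h2]; exact hBp
    exact (ENNReal.add_le_add_iff_left (measure_ne_top μ _)).mp h3
  have hmeaslr : (μ (A \ B)).toReal ≤ (μ (B \ A)).toReal :=
    ENNReal.toReal_le_toReal (measure_ne_top _ _) (measure_ne_top _ _) |>.mpr hmeasle
  have hint1 : ∫ x in A \ B, c x ∂μ ≤ lam * (μ (A \ B)).toReal := by
    calc ∫ x in A \ B, c x ∂μ ≤ ∫ _x in A \ B, lam ∂μ := by
          refine setIntegral_mono_on hci.integrableOn ((integrableOn_const_iff (by simp)).mpr ?_)
            (hAmeas.diff hB) (fun x hx => hAle x hx.1)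
          exact Or.inr (measure_lt_top _ _)
      _ = (μ (A \ B)).toReal * lam := by rw [setIntegral_const, smul_eq_mul, measureReal_def]
      _ = lam * (μ (A \ B)).toReal := mul_comm _ _
  have hint2 : lam * (μ (B \ A)).toReal ≤ ∫ x in B \ A, c x ∂μ := by
    calc lam * (μ (B \ A)).toReal = ∫ _x in B \ A, lam ∂μ := by
          rw [setIntegral_const, smul_eq_mul, measureReal_def, mul_comm]
      _ ≤ ∫ x in B \ A, c x ∂μ := by
          refine setIntegral_mono_on ((integrableOn_const_iff (by simp)).mpr ?_) hci.integrableOn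
            (hB.diff hAmeas) (fun x hx => hAge x hx.2)
          exact Or.inr (measure_lt_top _ _)
  have hsplitA : ∫ x in A, c x ∂μ = ∫ x in A ∩ B, c x ∂μ + ∫ x in A \ B, c x ∂μ :=
    (integral_inter_add_diff hB hci.integrableOn).symm
  have hsplitB : ∫ x in B, c x ∂μ = ∫ x in A ∩ B, c x ∂μ + ∫ x in B \ A, c x ∂μ := by
    rw [← integral_inter_add_diff hAmeas hci.integrableOn (s := B), Set.inter_comm]
  rw [hsplitA, hsplitB]
  have : lam * (μ (A \ B)).toReal ≤ lam * (μ (B \ A)).toReal :=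
    mul_le_mul_of_nonneg_left hmeaslr hlam0
  linarith

section VaRFacts
variable {Ω : Type*} [MeasurableSpace Ω] {P : Measure Ω} [IsProbabilityMeasure P]
  {p : ℝ} {Y : Ω → ℝ}

lemma var_set_upward {x y : ℝ} (hxy : x ≤ y) (hx : p ≤ (P {ω | Y ω ≤ x}).toReal) :
    p ≤ (P {ω | Y ω ≤ y}).toReal :=
  le_trans hx (ENNReal.toReal_mono (measure_ne_top _ _)
    (measure_mono fun ω h => le_trans h hxy))

lemma var_set_nonempty (hp1 : p < 1) : ∃ x : ℝ, p ≤ (P {ω | Y ω ≤ x}).toReal := by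
  have h3 : (⋃ n : ℕ, {ω | Y ω ≤ (n:ℝ)}) = Set.univ := by
    ext ω
    simp only [Set.mem_iUnion, Set.mem_setOf_eq, Set.mem_univ, iff_true]
    obtain ⟨n, hn⟩ := exists_nat_gt (Y ω)
    exact ⟨n, hn.le⟩
  have hmono : Monotone (fun n : ℕ => {ω | Y ω ≤ (n:ℝ)}) := by
    intro i j hij ω hω
    simp only [Set.mem_setOf_eq] at hω ⊢
    exact le_trans hω (by exact_mod_cast hij)
  have h4 := hmono.measure_iUnion (μ := P)
  rw [h3, measure_univ] at h4
  have h5 : ENNReal.ofReal p < ⨆ n : ℕ, P {ω | Y ω ≤ (n:ℝ)} := by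
    rw [← h4, ← ENNReal.ofReal_one]
    exact (ENNReal.ofReal_lt_ofReal_iff one_pos).mpr hp1
  obtain ⟨n, hn⟩ := lt_iSup_iff.mp h5
  exact ⟨n, (ENNReal.ofReal_le_iff_le_toReal (measure_ne_top _ _)).mp hn.le⟩


lemma var_set_mem_nonneg (hp0 : 0 < p) (hY : ∀ᵐ ω ∂P, 0 ≤ Y ω) {x : ℝ}
    (hx : p ≤ (P {ω | Y ω ≤ x}).toReal) : 0 ≤ x := by
  by_contra hneg
  push_neg at hneg
  have h1 : P {ω | Y ω ≤ x} = 0 := by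
    refine measure_mono_null (fun ω (h : Y ω ≤ x) => ?_)
      (by rwa [ae_iff] at hY : P {ω | ¬ 0 ≤ Y ω} = 0)
    simp only [Set.mem_setOf_eq, not_le]
    exact lt_of_le_of_lt h hneg
  rw [h1, ENNReal.toReal_zero] at hx
  linarith

lemma var_bddBelow (hp0 : 0 < p) (hY : ∀ᵐ ω ∂P, 0 ≤ Y ω) :
    BddBelow {x : ℝ | p ≤ (P {ω | Y ω ≤ x}).toReal} :=
  ⟨0, fun _ hx => var_set_mem_nonneg hp0 hY hx⟩

lemma var_nonneg (hp0 : 0 < p) (hp1 : p < 1) (hY : ∀ᵐ ω ∂P, 0 ≤ Y ω) :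
    0 ≤ VaR P p Y :=
  le_csInf (var_set_nonempty hp1) (fun _ hb => var_set_mem_nonneg hp0 hY hb)

lemma var_le (hp0 : 0 < p) (hY : ∀ᵐ ω ∂P, 0 ≤ Y ω) {x : ℝ}
    (hx : p ≤ (P {ω | Y ω ≤ x}).toReal) : VaR P p Y ≤ x :=
  csInf_le (var_bddBelow hp0 hY) hx

lemma var_add_mem (hp1 : p < 1) {ε : ℝ} (hε : 0 < ε) :
    p ≤ (P {ω | Y ω ≤ VaR P p Y + ε}).toReal := by
  have h1 : VaR P p Y < VaR P p Y + ε := by linarith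
  obtain ⟨y, hy, hlt⟩ := exists_lt_of_csInf_lt (var_set_nonempty hp1) h1
  exact var_set_upward hlt.le hy

end VaRFacts

end AuxNP

theorem stmt1 {Ω : Type*} [MeasurableSpace Ω] (P : Measure Ω) [IsProbabilityMeasure P]
    (hPatomless : Atomless P)
    (X : Ω → ℝ) (hXmeas : Measurable X) (hXnonneg : ∀ᵐ ω ∂P, 0 ≤ X ω)
    (hXdens : HasPositiveDensityOnSupport (Measure.map X P))
    (γ : ℝ → ℝ) (hγcont : Continuous γ) (hγpos : ∀ x, 0 < γ x)
    (hγint : Integrable (fun ω => γ (X ω)) P)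
    (hγ1 : ∫ ω, γ (X ω) ∂P = 1)
    (hγXint : Integrable (fun ω => γ (X ω) * X ω) P)
    (p : ℝ) (hp : p ∈ Set.Ioo (0 : ℝ) 1)
    (x₀ : ℝ) (hx₀ : 0 ≤ x₀) (hx₀lt : x₀ < ∫ ω, γ (X ω) * X ω ∂P)
    (q : ℝ)
    (hq : q = sInf {v : ℝ | ∃ g : ℝ → ℝ, memGns P X γ x₀ g ∧ v = VaR P p (fun ω => g (X ω))}) :
    (∃ g : ℝ → ℝ, memGns P X γ x₀ g ∧ VaR P p (fun ω => g (X ω)) = q) ∧ q < VaR P p X := by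
  obtain ⟨hp0, hp1⟩ := hp
  set μ : Measure ℝ := Measure.map X P with hμdef
  haveI : IsProbabilityMeasure μ := Measure.isProbabilityMeasure_map hXmeas.aemeasurable
  have hγm : Measurable γ := hγcont.measurable
  -- no atoms
  have hna : ∀ a : ℝ, μ {a} = 0 := by
    obtain ⟨f, hfm, hfd, -⟩ := hXdens
    intro a
    rw [hfd, withDensity_apply _ (measurableSet_singleton a),
      Measure.restrict_eq_zero.mpr (by simp), lintegral_zero_measure]
  -- transfers
  have hμnn : ∀ᵐ x ∂μ, 0 ≤ x := by
    rw [ae_iff]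
    have h1 : {x : ℝ | ¬ 0 ≤ x} = Set.Iio 0 := by ext x; simp [not_le]
    rw [h1, hμdef, Measure.map_apply hXmeas measurableSet_Iio]
    have h2 : X ⁻¹' Set.Iio 0 = {ω | ¬ 0 ≤ X ω} := by ext ω; simp [not_le]
    rw [h2]
    rwa [ae_iff] at hXnonneg
  have hγμ : Integrable γ μ :=
    (integrable_map_measure hγm.aestronglyMeasurable hXmeas.aemeasurable).mpr hγint
  have hγμ1 : ∫ x, γ x ∂μ = 1 := by
    rw [integral_map hXmeas.aemeasurable hγm.aestronglyMeasurable]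
    exact hγ1
  have hidm : Measurable (fun x : ℝ => γ x * x) := hγm.mul measurable_id
  have hidμ : Integrable (fun x => γ x * x) μ :=
    (integrable_map_measure hidm.aestronglyMeasurable hXmeas.aemeasurable).mpr hγXint
  have hMeq : ∫ x, γ x * x ∂μ = ∫ ω, γ (X ω) * X ω ∂P :=
    integral_map hXmeas.aemeasurable hidm.aestronglyMeasurable
  set M : ℝ := ∫ ω, γ (X ω) * X ω ∂P with hM
  set δ : ℝ := M - x₀ with hδ
  have hδpos : 0 < δ := by rw [hδ]; linarith
  -- the cost functions
  set c : ℝ → ℝ → ℝ := fun t x => γ x * max (x - t) 0 with hc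
  have hcmeas : ∀ t, Measurable (c t) :=
    fun t => hγm.mul ((measurable_id.sub measurable_const).max measurable_const)
  have hcnn : ∀ t x, 0 ≤ c t x := fun t x =>
    mul_nonneg (hγpos x).le (le_max_right _ _)
  have habs : Integrable (fun x => γ x * |x|) μ := by
    refine hidμ.congr ?_
    filter_upwards [hμnn] with x hx
    rw [abs_of_nonneg hx]
  have hcint : ∀ t, Integrable (c t) μ := by
    intro t
    refine Integrable.mono' (habs.add (hγμ.const_mul |t|)) (hcmeas t).aestronglyMeasurable ?_
    filter_upwards with x
    rw [Real.norm_eq_abs, abs_of_nonneg (hcnn t x), hc]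
    simp only
    have h1 : max (x - t) 0 ≤ |x| + |t| := by
      rcases le_total (x - t) 0 with h | h
      · rw [max_eq_right h]; positivity
      · rw [max_eq_left h]
        have := abs_sub_abs_le_abs_sub x t
        have h2 := le_abs_self x
        have h3 := neg_abs_le t
        linarith [le_abs_self (x - t), abs_sub x t]
    calc γ x * max (x - t) 0 ≤ γ x * (|x| + |t|) :=
          mul_le_mul_of_nonneg_left h1 (hγpos x).le
      _ = γ x * |x| + |t| * γ x := by ring
  -- Neyman-Pearson sets
  have key : ∀ t : ℝ, ∃ A : Set ℝ, MeasurableSet A ∧ μ A = ENNReal.ofReal p ∧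
      ∀ B : Set ℝ, MeasurableSet B → ENNReal.ofReal p ≤ μ B →
        ∫ x in A, c t x ∂μ ≤ ∫ x in B, c t x ∂μ :=
    fun t => np_lemma μ hna hp0 hp1 (hcmeas t) (hcnn t) (hcint t)
  choose A hA1 hA2 hA3 using key
  set D : ℝ → ℝ := fun t => ∫ x in A t, c t x ∂μ with hD
  have hDnn : ∀ t, 0 ≤ D t := fun t =>
    setIntegral_nonneg (hA1 t) (fun x _ => hcnn t x)
  have hcmono : ∀ s t x, s ≤ t → c t x ≤ c s x := by
    intro s t x hst
    refine mul_le_mul_of_nonneg_left (max_le_max ?_ le_rfl) (hγpos x).le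
    linarith
  have hDlip : ∀ s t, s ≤ t → D s ≤ D t + (t - s) := by
    intro s t hst
    have h1 : D s ≤ ∫ x in A t, c s x ∂μ := hA3 s (A t) (hA1 t) (hA2 t).ge
    have h2 : ∫ x in A t, c s x ∂μ ≤ ∫ x in A t, (c t x + (t - s) * γ x) ∂μ := by
      refine setIntegral_mono_on ((hcint s).integrableOn)
        (((hcint t).add (hγμ.const_mul (t - s))).integrableOn) (hA1 t) ?_
      intro x _
      rw [hc]
      simp only
      have h3 : max (x - s) 0 ≤ max (x - t) 0 + (t - s) := by
        rcases le_total (x - s) 0 with h | h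
        · rw [max_eq_right h]
          have := le_max_right (x - t) 0
          linarith
        · rw [max_eq_left h]
          have := le_max_left (x - t) 0
          linarith
      calc γ x * max (x - s) 0 ≤ γ x * (max (x - t) 0 + (t - s)) :=
            mul_le_mul_of_nonneg_left h3 (hγpos x).le
        _ = γ x * max (x - t) 0 + (t - s) * γ x := by ring
    have h4 : ∫ x in A t, (c t x + (t - s) * γ x) ∂μ
        = D t + (t - s) * ∫ x in A t, γ x ∂μ := by
      rw [integral_add ((hcint t).integrableOn) ((hγμ.const_mul (t - s)).integrableOn)]
      rw [integral_const_mul]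
    have h5 : ∫ x in A t, γ x ∂μ ≤ 1 := by
      rw [← hγμ1]
      refine setIntegral_le_integral hγμ ?_
      filter_upwards with x
      exact (hγpos x).le
    have h6 : (t - s) * ∫ x in A t, γ x ∂μ ≤ (t - s) * 1 :=
      mul_le_mul_of_nonneg_left h5 (by linarith)
    calc D s ≤ D t + (t - s) * ∫ x in A t, γ x ∂μ := by
          rw [← h4]; exact le_trans h1 h2
      _ ≤ D t + (t - s) := by linarith
  -- translation between P and μ for distribution sets
  have hmapX : ∀ r : ℝ, P {ω | X ω ≤ r} = μ (Set.Iic r) := by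
    intro r
    rw [hμdef, Measure.map_apply hXmeas measurableSet_Iic]
    rfl
  have hmapg : ∀ g : ℝ → ℝ, Measurable g → ∀ r : ℝ,
      P {ω | g (X ω) ≤ r} = μ {y | g y ≤ r} := by
    intro g hg r
    have hset : {y : ℝ | g y ≤ r} = g ⁻¹' Set.Iic r := rfl
    rw [hset, hμdef, Measure.map_apply hXmeas (hg measurableSet_Iic)]
    rfl
  set v : ℝ := VaR P p X with hv
  have hXTne : ∃ x : ℝ, p ≤ (P {ω | X ω ≤ x}).toReal := var_set_nonempty hp1
  have hvmemT : ENNReal.ofReal p ≤ μ (Set.Iic v) := by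
    have h1 : ∀ n : ℕ, ENNReal.ofReal p ≤ μ (Set.Iic (v + 1/(n+1))) := by
      intro n
      have h2 : (0:ℝ) < 1/(n+1) := by positivity
      have h3 := var_add_mem (P := P) (Y := X) hp1 h2
      rw [hmapX] at h3
      exact (ENNReal.ofReal_le_iff_le_toReal (measure_ne_top _ _)).mpr h3
    have h4 : μ (Set.Iic v) = ⨅ n : ℕ, μ (Set.Iic (v + 1/(n+1))) := by
      rw [← aux_iInter_Iic v]
      refine Antitone.measure_iInter (fun i j hij => Set.Iic_subset_Iic.mpr ?_)
        (fun n => measurableSet_Iic.nullMeasurableSet) ⟨0, measure_ne_top _ _⟩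
      have : (1:ℝ)/(j+1) ≤ 1/(i+1) := by
        apply one_div_le_one_div_of_le (by positivity)
        exact_mod_cast Nat.add_le_add_right hij 1
      linarith
    rw [h4]
    exact le_iInf h1
  have hv0 : 0 < v := by
    have hI0 : μ (Set.Iic (0:ℝ)) = 0 := by
      have h1 : μ (Set.Iio (0:ℝ)) = 0 := by
        have := ae_iff.mp hμnn
        convert this using 2
        ext x; simp [not_le]
      have h2 : Set.Iic (0:ℝ) = Set.Iio 0 ∪ {0} := by
        ext x; simp [le_iff_lt_or_eq]
      rw [h2]
      exact le_antisymm (le_trans (measure_union_le _ _) (by rw [h1, hna 0, add_zero]))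
        (zero_le)
    have h4 : (⨅ n : ℕ, μ (Set.Iic ((0:ℝ) + 1/(n+1)))) = 0 := by
      rw [← Antitone.measure_iInter (fun i j hij => Set.Iic_subset_Iic.mpr ?_)
        (fun n => measurableSet_Iic.nullMeasurableSet) ⟨0, measure_ne_top _ _⟩]
      · rw [aux_iInter_Iic (0:ℝ), hI0]
      · have : (1:ℝ)/(j+1) ≤ 1/(i+1) := by
          apply one_div_le_one_div_of_le (by positivity)
          exact_mod_cast Nat.add_le_add_right hij 1
        linarith
    have h5 : (⨅ n : ℕ, μ (Set.Iic ((0:ℝ) + 1/(n+1)))) < ENNReal.ofReal p := by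
      rw [h4]
      exact ENNReal.ofReal_pos.mpr hp0
    obtain ⟨n, hn⟩ := iInf_lt_iff.mp h5
    have h6 : ∀ y : ℝ, p ≤ (P {ω | X ω ≤ y}).toReal → (0:ℝ) + 1/(n+1) < y := by
      intro y hy
      by_contra hcon
      push_neg at hcon
      rw [hmapX] at hy
      have h7 : ENNReal.ofReal p ≤ μ (Set.Iic y) :=
        (ENNReal.ofReal_le_iff_le_toReal (measure_ne_top _ _)).mpr hy
      exact absurd (lt_of_le_of_lt (le_trans h7
        (measure_mono (Set.Iic_subset_Iic.mpr hcon))) hn) (lt_irrefl _)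
    have h8 : (0:ℝ) + 1/(n+1) ≤ v :=
      le_csInf hXTne fun y hy => (h6 y hy).le
    have h9 : (0:ℝ) < 1/(n+1) := by positivity
    linarith
  have hDv : D v ≤ 0 := by
    have h1 := hA3 v (Set.Iic v) measurableSet_Iic hvmemT
    have h2 : ∫ x in Set.Iic v, c v x ∂μ = 0 := by
      rw [show (0:ℝ) = ∫ x in Set.Iic v, (0:ℝ) ∂μ by rw [integral_zero]]
      refine setIntegral_congr_fun measurableSet_Iic ?_
      intro x hx
      rw [hc]
      simp only
      rw [max_eq_right (by simp only [Set.mem_Iic] at hx; linarith), mul_zero]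
    rw [h2] at h1
    exact h1
  set K : Set ℝ := {t : ℝ | 0 ≤ t ∧ D t ≤ δ} with hK
  have hvK : v ∈ K := ⟨hv0.le, le_trans hDv hδpos.le⟩
  have hKne : K.Nonempty := ⟨v, hvK⟩
  have hKbdd : BddBelow K := ⟨0, fun t ht => ht.1⟩
  set tstar : ℝ := sInf K with hts
  have hts0 : 0 ≤ tstar := le_csInf hKne fun t ht => ht.1
  have hDts : D tstar ≤ δ := by
    refine le_of_forall_pos_le_add ?_
    intro ε hε
    obtain ⟨t, htK, hlt⟩ := exists_lt_of_csInf_lt hKne (lt_add_of_pos_right tstar hε)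
    have h1 : tstar ≤ t := csInf_le hKbdd htK
    have h2 := hDlip tstar t h1
    have h3 := htK.2
    linarith
  have htv : tstar < v := by
    set ε : ℝ := min δ v with hε
    have hε0 : 0 < ε := lt_min hδpos hv0
    have h1 : v - ε ∈ K := by
      constructor
      · have := min_le_right δ v
        simp only [hε] at *
        linarith
      · have h2 := hDlip (v - ε) v (by linarith)
        have h3 := min_le_left δ v
        simp only [hε] at *
        linarith
    have h4 : tstar ≤ v - ε := csInf_le hKbdd h1
    linarith
  -- the optimal claim function
  set gs : ℝ → ℝ := fun x => if x ∈ A tstar then min x tstar else x with hgs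
  have hgsm : Measurable gs :=
    Measurable.ite (hA1 tstar) (measurable_id.min measurable_const) measurable_id
  have hpt : ∀ x, γ x * gs x = γ x * x - (A tstar).indicator (c tstar) x := by
    intro x
    rw [hgs]
    simp only
    by_cases hx : x ∈ A tstar
    · rw [if_pos hx, Set.indicator_of_mem hx, hc]
      simp only
      rcases le_total x tstar with h | h
      · rw [min_eq_left h, max_eq_right (by linarith)]
        ring
      · rw [min_eq_right h, max_eq_left (by linarith)]
        ring
    · rw [if_neg hx, Set.indicator_of_notMem hx]
      ring
  have hgsint_μ : Integrable (fun x => γ x * gs x) μ := by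
    refine (hidμ.sub ((hcint tstar).indicator (hA1 tstar))).congr ?_
    filter_upwards with x
    exact (hpt x).symm
  have hgsint_val : ∫ x, γ x * gs x ∂μ = M - D tstar := by
    have h1 : ∫ x, γ x * gs x ∂μ
        = ∫ x, (γ x * x - (A tstar).indicator (c tstar) x) ∂μ := by
      congr 1
      funext x
      exact hpt x
    rw [h1, integral_sub hidμ ((hcint tstar).indicator (hA1 tstar)),
      integral_indicator (hA1 tstar), hMeq]
  have hgsintP : Integrable (fun ω => γ (X ω) * gs (X ω)) P := by
    have h1 := (integrable_map_measure (hγm.mul hgsm).aestronglyMeasurable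
      hXmeas.aemeasurable).mp (by exact hgsint_μ)
    exact h1
  have hbudget : x₀ ≤ ∫ ω, γ (X ω) * gs (X ω) ∂P := by
    have h1 : ∫ ω, γ (X ω) * gs (X ω) ∂P = ∫ x, γ x * gs x ∂μ :=
      (integral_map hXmeas.aemeasurable (hγm.mul hgsm).aestronglyMeasurable).symm
    rw [h1, hgsint_val, hδ] at *
    linarith
  have hgs_ae_μ : ∀ᵐ x ∂μ, 0 ≤ gs x ∧ gs x ≤ x := by
    filter_upwards [hμnn] with x hx
    rw [hgs]
    simp only
    by_cases hmem : x ∈ A tstar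
    · rw [if_pos hmem]
      exact ⟨le_min hx hts0, min_le_left _ _⟩
    · rw [if_neg hmem]
      exact ⟨hx, le_rfl⟩
  have hgs_aeP : ∀ᵐ ω ∂P, 0 ≤ gs (X ω) ∧ gs (X ω) ≤ X ω := by
    have hmeas : MeasurableSet {x : ℝ | 0 ≤ gs x ∧ gs x ≤ x} :=
      (measurableSet_le measurable_const hgsm).inter (measurableSet_le hgsm measurable_id)
    exact (MeasureTheory.ae_map_iff hXmeas.aemeasurable hmeas).mp (by exact hgs_ae_μ)
  have hgsmem : memGns P X γ x₀ gs := ⟨hgsm, hgsintP, hbudget, hgs_aeP⟩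
  have hVaRgs_le : VaR P p (fun ω => gs (X ω)) ≤ tstar := by
    refine var_le hp0 (by filter_upwards [hgs_aeP] with ω h; exact h.1) ?_
    rw [hmapg gs hgsm tstar]
    have hsub : A tstar ⊆ {y | gs y ≤ tstar} := by
      intro x hx
      simp only [Set.mem_setOf_eq, hgs]
      rw [if_pos hx]
      exact min_le_right _ _
    have h1 := le_trans (hA2 tstar).ge (measure_mono hsub)
    exact (ENNReal.ofReal_le_iff_le_toReal (measure_ne_top _ _)).mp h1
  -- lower bound for all feasible claims
  have hlow : ∀ g : ℝ → ℝ, memGns P X γ x₀ g →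
      tstar ≤ VaR P p (fun ω => g (X ω)) := by
    intro g hg
    obtain ⟨hgm, hgint, hgbud, hgae⟩ := hg
    set s : ℝ := VaR P p (fun ω => g (X ω)) with hsdef
    have hs0 : 0 ≤ s :=
      var_nonneg hp0 hp1 (by filter_upwards [hgae] with ω h; exact h.1)
    have hgaeμ : ∀ᵐ x ∂μ, 0 ≤ g x ∧ g x ≤ x := by
      have hmeas : MeasurableSet {x : ℝ | 0 ≤ g x ∧ g x ≤ x} :=
        (measurableSet_le measurable_const hgm).inter (measurableSet_le hgm measurable_id)
      exact (MeasureTheory.ae_map_iff hXmeas.aemeasurable hmeas).mpr (by exact hgae)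
    have hgμint : Integrable (fun x => γ x * g x) μ :=
      (integrable_map_measure (hγm.mul hgm).aestronglyMeasurable
        hXmeas.aemeasurable).mpr hgint
    have hgμval : ∫ x, γ x * g x ∂μ = ∫ ω, γ (X ω) * g (X ω) ∂P :=
      integral_map hXmeas.aemeasurable (hγm.mul hgm).aestronglyMeasurable
    have hhint : Integrable (fun x => γ x * (x - g x)) μ := by
      refine (hidμ.sub hgμint).congr ?_
      filter_upwards with x
      simp only [Pi.sub_apply]
      ring
    have hhval : ∫ x, γ x * (x - g x) ∂μ ≤ δ := by
      have h1 : ∫ x, γ x * (x - g x) ∂μ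
          = (∫ x, γ x * x ∂μ) - ∫ x, γ x * g x ∂μ := by
        rw [← integral_sub hidμ hgμint]
        congr 1
        funext x
        ring
      rw [h1, hMeq, hgμval, hδ]
      linarith
    refine le_of_forall_pos_le_add ?_
    intro ε hε
    have hmem := var_add_mem (P := P) (Y := fun ω => g (X ω)) hp1 hε
    rw [← hsdef] at hmem
    rw [hmapg g hgm (s + ε)] at hmem
    set B : Set ℝ := {y : ℝ | g y ≤ s + ε} with hB
    have hBmeas : MeasurableSet B := by
      rw [hB, show {y : ℝ | g y ≤ s + ε} = g ⁻¹' Set.Iic (s + ε) from rfl]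
      exact hgm measurableSet_Iic
    have hBp : ENNReal.ofReal p ≤ μ B :=
      (ENNReal.ofReal_le_iff_le_toReal (measure_ne_top _ _)).mpr hmem
    have h2 : D (s + ε) ≤ ∫ x in B, c (s + ε) x ∂μ := hA3 (s + ε) B hBmeas hBp
    have h3 : ∫ x in B, c (s + ε) x ∂μ ≤ ∫ x in B, γ x * (x - g x) ∂μ := by
      refine setIntegral_mono_ae_restrict ((hcint (s + ε)).integrableOn)
        (hhint.integrableOn) ?_
      filter_upwards [ae_restrict_of_ae hgaeμ, ae_restrict_mem hBmeas] with x hx hxB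
      rw [hc]
      simp only
      have h4 : g x ≤ s + ε := hxB
      have h5 : max (x - (s + ε)) 0 ≤ x - g x :=
        max_le (by linarith) (by linarith [hx.2])
      exact mul_le_mul_of_nonneg_left h5 (hγpos x).le
    have h6 : ∫ x in B, γ x * (x - g x) ∂μ ≤ ∫ x, γ x * (x - g x) ∂μ := by
      refine setIntegral_le_integral hhint ?_
      filter_upwards [hgaeμ] with x hx
      exact mul_nonneg (hγpos x).le (by linarith [hx.2])
    have h7 : s + ε ∈ K := ⟨by linarith, by linarith⟩
    exact csInf_le hKbdd h7
  -- conclusion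
  have hSlb : ∀ w ∈ {v' : ℝ | ∃ g : ℝ → ℝ, memGns P X γ x₀ g ∧
      v' = VaR P p (fun ω => g (X ω))}, tstar ≤ w := by
    rintro w ⟨g, hgmem, rfl⟩
    exact hlow g hgmem
  have hSmem : VaR P p (fun ω => gs (X ω)) ∈ {v' : ℝ | ∃ g : ℝ → ℝ,
      memGns P X γ x₀ g ∧ v' = VaR P p (fun ω => g (X ω))} := ⟨gs, hgsmem, rfl⟩
  have hqts : q = tstar := by
    rw [hq]
    refine le_antisymm ?_ (le_csInf ⟨_, hSmem⟩ hSlb)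
    exact le_trans (csInf_le ⟨tstar, hSlb⟩ hSmem) hVaRgs_le
  constructor
  · refine ⟨gs, hgsmem, ?_⟩
    rw [hqts]
    exact le_antisymm hVaRgs_le (hlow gs hgsmem)
  · rw [hqts]
    exact htv
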